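/- arXiv:1509.03743 — 2 statements merged into one kernel-verified Lean document; each statement's English description precedes it below -/
import Mathlib

section
/- Let i ≠ j. For any X ⊆ U^α with C_j X = X, one has C_j (S^i_j X) = S^i_j (C_i X); consequently the map S^i_j carries C_j-closed sets bijectively onto C_i-closed sets, intertwining C_i on the source with C_j on the target. -/
def cyl {α U : Type*} [DecidableEq α] (i : α) (X : Set (α → U)) : Set (α → U) :=
  {t | ∃ s ∈ X, ∃ u : U, t = Function.update s i u}

def substP {α U : Type*} [DecidableEq α] (i j : α) (X : Set (α → U)) : Set (α → U) :=
  {s | Function.update s i (s j) ∈ X}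

section Aux
variable {α U : Type*} [DecidableEq α]

lemma cyl_closed_iff' {k : α} {X : Set (α → U)} :
    cyl k X = X ↔ ∀ s ∈ X, ∀ u : U, Function.update s k u ∈ X := by
  constructor
  · intro h s hs u
    rw [← h]; exact ⟨s, hs, u, rfl⟩
  · intro h
    apply Set.Subset.antisymm
    · rintro t ⟨s, hs, u, rfl⟩; exact h s hs u
    · intro s hs; exact ⟨s, hs, s k, by simp⟩

lemma upd_ij_eq (i j : α) (hij : i ≠ j) (x : α → U) :
    Function.update (Function.update x j (x i)) i ((Function.update x j (x i)) j) =
      Function.update x j (x i) := by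
  funext k
  simp only [Function.update_apply]
  split_ifs <;> simp_all

lemma substP_closed (i j : α) (hij : i ≠ j) (X : Set (α → U)) :
    cyl i (substP i j X) = substP i j X := by
  rw [cyl_closed_iff']
  intro s hs u
  show Function.update (Function.update s i u) i ((Function.update s i u) j) ∈ X
  rwa [Function.update_of_ne hij.symm, Function.update_idem]

lemma substP_substP (i j : α) (hij : i ≠ j) (Y : Set (α → U)) (hY : cyl i Y = Y) :
    substP i j (substP j i Y) = Y := by
  have hY' := cyl_closed_iff'.mp hY
  ext s
  show Function.update (Function.update s i (s j)) j ((Function.update s i (s j)) i) ∈ Y ↔ s ∈ Y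
  rw [show Function.update (Function.update s i (s j)) j ((Function.update s i (s j)) i) =
      Function.update s i (s j) from by
        funext k
        simp only [Function.update_apply]
        split_ifs <;> simp_all]
  constructor
  · intro h
    have := hY' _ h (s i)
    rwa [Function.update_idem, Function.update_eq_self] at this
  · intro h; exact hY' _ h (s j)

lemma inj_aux (i j : α) (hij : i ≠ j) {X Y : Set (α → U)}
    (hX : cyl j X = X) (hY : cyl j Y = Y) (h : substP i j X ⊆ substP i j Y) : X ⊆ Y := by
  intro x hx
  have h2 : Function.update x j (x i) ∈ substP i j X := by
    show Function.update (Function.update x j (x i)) i ((Function.update x j (x i)) j) ∈ X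
    rw [upd_ij_eq i j hij]
    exact cyl_closed_iff'.mp hX x hx (x i)
  have h4 : Function.update x j (x i) ∈ Y := by
    have h3 : Function.update (Function.update x j (x i)) i
        ((Function.update x j (x i)) j) ∈ Y := h h2
    rwa [upd_ij_eq i j hij] at h3
  have := cyl_closed_iff'.mp hY _ h4 (x j)
  rwa [Function.update_idem, Function.update_eq_self] at this

lemma claim1 (i j : α) (hij : i ≠ j) (X : Set (α → U)) (hX : cyl j X = X) :
    cyl j (substP i j X) = substP i j (cyl i X) := by
  have hX' := cyl_closed_iff'.mp hX
  ext t
  constructor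
  · rintro ⟨s, hs, u, rfl⟩
    -- hs : Function.update s i (s j) ∈ X
    refine ⟨Function.update (Function.update s i (s j)) j u, hX' _ hs u, u, ?_⟩
    funext k
    simp only [Function.update_apply]
    split_ifs <;> simp_all
  · rintro ⟨s, hs, u, heq⟩
    have hkey : ∀ k, k ≠ i → t k = s k := by
      intro k hk
      have := congrFun heq k
      rwa [Function.update_of_ne hk, Function.update_of_ne hk] at this
    refine ⟨Function.update t j (s i), ?_, t j, ?_⟩
    · show Function.update (Function.update t j (s i)) i
        ((Function.update t j (s i)) j) ∈ X
      have : Function.update (Function.update t j (s i)) i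
          ((Function.update t j (s i)) j) = Function.update s j (s i) := by
        funext k
        simp only [Function.update_apply]
        split_ifs <;> simp_all [hkey]
      rw [this]
      exact hX' s hs (s i)
    · funext k
      simp only [Function.update_apply]
      split_ifs <;> simp_all

end Aux

theorem stmt_11 {α U : Type*} [DecidableEq α] (i j : α) (hij : i ≠ j) :
    (∀ X : Set (α → U), cyl j X = X → cyl j (substP i j X) = substP i j (cyl i X)) ∧
    Set.BijOn (substP i j) {X : Set (α → U) | cyl j X = X} {X : Set (α → U) | cyl i X = X} := by
  refine ⟨fun X hX => claim1 i j hij X hX, ?_, ?_, ?_⟩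
  · intro X _
    exact substP_closed i j hij X
  · intro X hX Y hY h
    exact Set.Subset.antisymm (inj_aux i j hij hX hY h.le) (inj_aux i j hij hY hX h.ge)
  · intro Y hY
    exact ⟨substP j i Y, substP_closed j i hij.symm Y, substP_substP i j hij Y hY⟩
end

section
/- Let V_0 = ℚ and let g = { (u, v, w) ∈ ℚ³ : u < v < w and v = (u + w)/2 } and T = { (u, v, w) ∈ ℚ³ : u < v < w }. Then g is a sensitive cut of T: for each coordinate i ∈ {0,1,2}, C_i g = C_i (T \ g) = C_i T, where C_i is the cylindrification on subsets of ℚ³ replacing the i-th coordinate by an arbitrary rational. -/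
def gSet : Set (Fin 3 → ℚ) :=
  {s | s 0 < s 1 ∧ s 1 < s 2 ∧ s 1 = (s 0 + s 2) / 2}

def TSet : Set (Fin 3 → ℚ) :=
  {s | s 0 < s 1 ∧ s 1 < s 2}

lemma cyl_mono {α U : Type*} [DecidableEq α] (i : α) {X Y : Set (α → U)}
    (h : X ⊆ Y) : cyl i X ⊆ cyl i Y := by
  rintro t ⟨s, hs, u, rfl⟩
  exact ⟨s, h hs, u, rfl⟩

lemma subset_cyl {α U : Type*} [DecidableEq α] (i : α) (X : Set (α → U)) :
    X ⊆ cyl i X := by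
  intro s hs
  exact ⟨s, hs, s i, by simp⟩

lemma cyl_cyl {α U : Type*} [DecidableEq α] (i : α) (X : Set (α → U)) :
    cyl i (cyl i X) ⊆ cyl i X := by
  rintro t ⟨s', ⟨s, hs, v, rfl⟩, u, rfl⟩
  exact ⟨s, hs, u, by simp [Function.update_idem]⟩

lemma cyl_eq_of {α U : Type*} [DecidableEq α] (i : α) {X Y : Set (α → U)}
    (hXY : X ⊆ cyl i Y) (hYX : Y ⊆ cyl i X) : cyl i X = cyl i Y :=
  Set.Subset.antisymm
    (fun t ht => cyl_cyl i Y (cyl_mono i hXY ht))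
    (fun t ht => cyl_cyl i X (cyl_mono i hYX ht))

lemma mem_cyl_update {α U : Type*} [DecidableEq α] (i : α) {X : Set (α → U)}
    (s : α → U) (v : U) (h : Function.update s i v ∈ X) : s ∈ cyl i X :=
  ⟨Function.update s i v, h, s i, by simp [Function.update_idem]⟩

lemma T_sub_cyl_g : ∀ i : Fin 3, TSet ⊆ cyl i gSet := by
  intro i s hs
  obtain ⟨h1, h2⟩ := hs
  fin_cases i
  · refine mem_cyl_update 0 s (2 * s 1 - s 2) ?_
    refine ⟨?_, ?_, ?_⟩ <;>
      simp [Function.update, Fin.ext_iff] <;> linarith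
  · refine mem_cyl_update 1 s ((s 0 + s 2) / 2) ?_
    refine ⟨?_, ?_, ?_⟩ <;>
      simp [Function.update, Fin.ext_iff] <;> linarith
  · refine mem_cyl_update 2 s (2 * s 1 - s 0) ?_
    refine ⟨?_, ?_, ?_⟩ <;>
      simp [Function.update, Fin.ext_iff] <;> linarith

lemma T_sub_cyl_Tg : ∀ i : Fin 3, TSet ⊆ cyl i (TSet \ gSet) := by
  intro i s hs
  obtain ⟨h1, h2⟩ := hs
  fin_cases i
  · refine mem_cyl_update 0 s (2 * s 1 - s 2 - 1) ?_
    refine ⟨⟨?_, ?_⟩, fun hg => ?_⟩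
    · simp [Function.update, Fin.ext_iff]; linarith
    · simp [Function.update, Fin.ext_iff]; linarith
    · obtain ⟨_, _, h3⟩ := hg
      simp [Function.update, Fin.ext_iff] at h3; linarith
  · refine mem_cyl_update 1 s ((3 * s 0 + s 2) / 4) ?_
    refine ⟨⟨?_, ?_⟩, fun hg => ?_⟩
    · simp [Function.update, Fin.ext_iff]; linarith
    · simp [Function.update, Fin.ext_iff]; linarith
    · obtain ⟨_, _, h3⟩ := hg
      simp [Function.update, Fin.ext_iff] at h3; linarith
  · refine mem_cyl_update 2 s (2 * s 1 - s 0 + 1) ?_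
    refine ⟨⟨?_, ?_⟩, fun hg => ?_⟩
    · simp [Function.update, Fin.ext_iff]; linarith
    · simp [Function.update, Fin.ext_iff]; linarith
    · obtain ⟨_, _, h3⟩ := hg
      simp [Function.update, Fin.ext_iff] at h3; linarith

theorem stmt_13 :
    ∀ i : Fin 3, cyl i gSet = cyl i (TSet \ gSet) ∧ cyl i gSet = cyl i TSet := by
  intro i
  have hgT : gSet ⊆ TSet := fun s hs => ⟨hs.1, hs.2.1⟩
  have h1 : cyl i gSet = cyl i TSet :=
    cyl_eq_of i (fun s hs => subset_cyl i TSet (hgT hs)) (T_sub_cyl_g i)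
  have h2 : cyl i (TSet \ gSet) = cyl i TSet :=
    cyl_eq_of i (fun s hs => subset_cyl i TSet hs.1) (T_sub_cyl_Tg i)
  exact ⟨h1.trans h2.symm, h1⟩
end
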